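/- Let A be the 4×4 real matrix with rows (−√3/8, −√3/24, 0, 0), (√3/24, √3/8, 0, 0), (1/4 − √3/8, 1/4 + √3/8, 1/4, 1/4 − √3/6), (1/4 − √3/8, 1/4 + √3/8, 1/4 + √3/6, 1/4), b = (1/4 − √3/8, 1/4 + √3/8, 1/4 + √3/8, 1/4 − √3/8), and 𝟙 = (1,1,1,1). Then for every z ∈ ℂ such that the matrix I − z·A is invertible and 1 − z/2 + z²/12 ≠ 0, the stability function satisfies 1 + z·bᵀ(I − z·A)⁻¹𝟙 = (1 + z/2 + z²/12)/(1 − z/2 + z²/12), i.e. it equals the (2,2)-Padé approximation of the exponential, which is also the stability function of the 2-stage Gauss–Legendre method of order 4. -/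

import Mathlib

open Matrix

/-- Coefficient matrix of the 4-stage conjugate-symplectic method, regarded as complex. -/
noncomputable def hatAC : Matrix (Fin 4) (Fin 4) ℂ :=
  !![-(Real.sqrt 3 : ℂ)/8, -(Real.sqrt 3 : ℂ)/24, 0, 0;
     (Real.sqrt 3 : ℂ)/24, (Real.sqrt 3 : ℂ)/8, 0, 0;
     1/4 - (Real.sqrt 3 : ℂ)/8, 1/4 + (Real.sqrt 3 : ℂ)/8, 1/4, 1/4 - (Real.sqrt 3 : ℂ)/6;
     1/4 - (Real.sqrt 3 : ℂ)/8, 1/4 + (Real.sqrt 3 : ℂ)/8, 1/4 + (Real.sqrt 3 : ℂ)/6, 1/4]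

/-- Weights of the 4-stage conjugate-symplectic method, regarded as complex. -/
noncomputable def hatBC : Fin 4 → ℂ :=
  ![1/4 - (Real.sqrt 3 : ℂ)/8, 1/4 + (Real.sqrt 3 : ℂ)/8,
    1/4 + (Real.sqrt 3 : ℂ)/8, 1/4 - (Real.sqrt 3 : ℂ)/8]

lemma sqrt3_sq : ((Real.sqrt 3 : ℂ)) ^ 2 = 3 := by
  rw [sq]; norm_cast; exact Real.mul_self_sqrt (by norm_num)

set_option maxHeartbeats 1000000 in
lemma myDetFinFour {R : Type*} [CommRing R] (M : Matrix (Fin 4) (Fin 4) R) :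
    M.det =
      M 0 0 * (M 1 1 * (M 2 2 * M 3 3 - M 2 3 * M 3 2) - M 1 2 * (M 2 1 * M 3 3 - M 2 3 * M 3 1) +
        M 1 3 * (M 2 1 * M 3 2 - M 2 2 * M 3 1)) -
      M 0 1 * (M 1 0 * (M 2 2 * M 3 3 - M 2 3 * M 3 2) - M 1 2 * (M 2 0 * M 3 3 - M 2 3 * M 3 0) +
        M 1 3 * (M 2 0 * M 3 2 - M 2 2 * M 3 0)) +
      M 0 2 * (M 1 0 * (M 2 1 * M 3 3 - M 2 3 * M 3 1) - M 1 1 * (M 2 0 * M 3 3 - M 2 3 * M 3 0) +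
        M 1 3 * (M 2 0 * M 3 1 - M 2 1 * M 3 0)) -
      M 0 3 * (M 1 0 * (M 2 1 * M 3 2 - M 2 2 * M 3 1) - M 1 1 * (M 2 0 * M 3 2 - M 2 2 * M 3 0) +
        M 1 2 * (M 2 0 * M 3 1 - M 2 1 * M 3 0)) := by
  rw [Matrix.det_succ_row_zero]
  simp [Fin.sum_univ_succ, Matrix.det_fin_three, Fin.succAbove]
  ring

set_option maxHeartbeats 1000000 in
theorem stmt6 (z : ℂ) (hinv : IsUnit (1 - z • hatAC))
    (hden : 1 - z/2 + z^2/12 ≠ 0) :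
    1 + z * (hatBC ⬝ᵥ ((1 - z • hatAC)⁻¹ *ᵥ (fun _ => 1)))
      = (1 + z/2 + z^2/12) / (1 - z/2 + z^2/12) := by
  have hs2 : ((Real.sqrt 3 : ℂ)) ^ 2 = 3 := sqrt3_sq
  have hdet : (1 - z • hatAC).det = (1 - z^2/24) * (1 - z/2 + z^2/12) := by
    rw [myDetFinFour]
    simp [hatAC, Matrix.smul_apply, Matrix.one_apply, Matrix.sub_apply]
    linear_combination ((-(z^4)/2592) * (Real.sqrt 3 : ℂ)^2 + z^2/72 + z^3/144 - z^4/864) * hs2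
  have hd1 : (1 - z^2/24 : ℂ) ≠ 0 := by
    intro h
    exact ((Matrix.isUnit_iff_isUnit_det _).mp hinv).ne_zero (by rw [hdet, h, zero_mul])
  have hD : ((1 - z^2/24) * (1 - z/2 + z^2/12) : ℂ) ≠ 0 := mul_ne_zero hd1 hden
  set u : Fin 4 → ℂ :=
    ![(1 - z/2 + z^2/12) * (1 - z*(Real.sqrt 3 : ℂ)/6),
      (1 - z/2 + z^2/12) * (1 + z*(Real.sqrt 3 : ℂ)/6),
      (1 + z/2 + z^2/12) * (1 - z*(Real.sqrt 3 : ℂ)/6),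
      (1 + z/2 + z^2/12) * (1 + z*(Real.sqrt 3 : ℂ)/6)] with hu
  have key : (1 - z • hatAC) *ᵥ u = fun _ => (1 - z^2/24) * (1 - z/2 + z^2/12) := by
    funext i
    fin_cases i
    · simp [hu, Matrix.mulVec, dotProduct, hatAC, Matrix.smul_apply,
        Matrix.one_apply, Matrix.sub_apply, Fin.sum_univ_four]
      linear_combination ((-1/72 : ℂ) * z^2 + (1/144 : ℂ) * z^3 + (-1/864 : ℂ) * z^4) * hs2
    · simp [hu, Matrix.mulVec, dotProduct, hatAC, Matrix.smul_apply,
        Matrix.one_apply, Matrix.sub_apply, Fin.sum_univ_four]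
      linear_combination ((-1/72 : ℂ) * z^2 + (1/144 : ℂ) * z^3 + (-1/864 : ℂ) * z^4) * hs2
    · simp [hu, Matrix.mulVec, dotProduct, hatAC, Matrix.smul_apply,
        Matrix.one_apply, Matrix.sub_apply, Fin.sum_univ_four]
      linear_combination ((-1/72 : ℂ) * z^2 + (5/144 : ℂ) * z^3 + (-1/864 : ℂ) * z^4) * hs2
    · simp [hu, Matrix.mulVec, dotProduct, hatAC, Matrix.smul_apply,
        Matrix.one_apply, Matrix.sub_apply, Fin.sum_univ_four]
      linear_combination ((-1/72 : ℂ) * z^2 + (5/144 : ℂ) * z^3 + (-1/864 : ℂ) * z^4) * hs2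
  have hwinv : (1 - z • hatAC)⁻¹ *ᵥ (fun _ => 1)
      = ((1 - z^2/24) * (1 - z/2 + z^2/12))⁻¹ • u := by
    have h2 : (1 - z • hatAC) *ᵥ (((1 - z^2/24) * (1 - z/2 + z^2/12))⁻¹ • u)
        = (fun _ => 1) := by
      rw [Matrix.mulVec_smul, key]
      funext i
      simp only [Pi.smul_apply, smul_eq_mul]
      exact inv_mul_cancel₀ hD
    rw [← h2, Matrix.mulVec_mulVec, Matrix.nonsing_inv_mul _
      ((Matrix.isUnit_iff_isUnit_det _).mp hinv), Matrix.one_mulVec]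
  have hQ : hatBC ⬝ᵥ u = 1 - z^2/24 := by
    simp [hatBC, hu, dotProduct, Fin.sum_univ_four]
    linear_combination ((-1/24 : ℂ) * z^2) * hs2
  rw [hwinv, dotProduct_smul, hQ, smul_eq_mul]
  have h1 : ((1 - z^2/24) * (1 - z/2 + z^2/12))⁻¹ * (1 - z^2/24)
      = (1 - z/2 + z^2/12)⁻¹ := by
    rw [mul_inv, mul_comm ((1 - z^2/24 : ℂ))⁻¹, mul_assoc, inv_mul_cancel₀ hd1, mul_one]
  rw [h1, eq_div_iff hden, add_mul, one_mul, mul_assoc, inv_mul_cancel₀ hden, mul_one]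
  ring
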